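/- Every finite subgroup G of PGL(2,ℂ) is conjugate within PGL(2,ℂ) to a subgroup of the image of the unitary group U(2) under the canonical projection GL(2,ℂ) → PGL(2,ℂ). (Every finite group of Möbius transformations is conjugate into the maximal compact subgroup PU(2) of the Möbius group.) -/

import Mathlib

open Matrix
open scoped ComplexOrder

/-- Central elements of `GL(2,ℂ)` are scalar matrices. -/
lemma aux_central_scalar (C : GL (Fin 2) ℂ) (hC : C ∈ Subgroup.center (GL (Fin 2) ℂ)) :
    ∃ c : ℂ, (C : Matrix (Fin 2) (Fin 2) ℂ) = c • (1 : Matrix (Fin 2) (Fin 2) ℂ) := by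
  rw [Subgroup.mem_center_iff] at hC
  have key : Pairwise fun i j : Fin 2 =>
      Commute (single i j 1) (C : Matrix (Fin 2) (Fin 2) ℂ) := by
    intro i j hij
    set E := single i j (1:ℂ) with hE
    have hE2 : E * E = 0 := by
      rw [hE, single_mul_single_of_ne _ _ _ _ (Ne.symm hij)]
    have h1 : (1 + E) * (1 - E) = 1 := by
      rw [mul_sub, mul_one, add_mul, one_mul, hE2]; abel
    have h2 : (1 - E) * (1 + E) = 1 := by
      rw [sub_mul, one_mul, mul_add, mul_one, hE2]; abel
    have h := hC ⟨1 + E, 1 - E, h1, h2⟩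
    have hval := congrArg Units.val h
    simp only [Units.val_mul] at hval
    have : E * (C : Matrix (Fin 2) (Fin 2) ℂ) = (C : Matrix (Fin 2) (Fin 2) ℂ) * E := by
      have h' : (C : Matrix (Fin 2) (Fin 2) ℂ) + E * C = C + (C : Matrix (Fin 2) (Fin 2) ℂ) * E := by
        calc (C : Matrix (Fin 2) (Fin 2) ℂ) + E * C = (1 + E) * C := by rw [add_mul, one_mul]
        _ = (C : Matrix (Fin 2) (Fin 2) ℂ) * (1 + E) := hval
        _ = C + (C : Matrix (Fin 2) (Fin 2) ℂ) * E := by rw [mul_add, mul_one]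
      exact add_left_cancel h'
    exact this
  obtain ⟨c, hc⟩ := mem_range_scalar_of_commute_single key
  refine ⟨c, ?_⟩
  rw [← hc, scalar_apply]
  ext i j
  by_cases h : i = j <;> simp [h, Matrix.one_apply, Matrix.diagonal_apply]

/-- Scalar units are central in `GL(2,ℂ)`. -/
lemma aux_scalar_central (U : GL (Fin 2) ℂ) (c : ℂ)
    (hU : (U : Matrix (Fin 2) (Fin 2) ℂ) = c • (1 : Matrix (Fin 2) (Fin 2) ℂ)) :
    U ∈ Subgroup.center (GL (Fin 2) ℂ) := by
  rw [Subgroup.mem_center_iff]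
  intro g
  ext : 1
  show (g : Matrix (Fin 2) (Fin 2) ℂ) * U = (U : Matrix (Fin 2) (Fin 2) ℂ) * g
  rw [hU, Matrix.mul_smul, Matrix.smul_mul, mul_one, one_mul]

/-- If two elements of `GL(2,ℂ)` have the same image in `PGL2`, they differ by a
nonzero scalar. -/
lemma aux_lift_eq (A B : GL (Fin 2) ℂ)
    (h : (QuotientGroup.mk A : GL (Fin 2) ℂ ⧸ Subgroup.center (GL (Fin 2) ℂ)) =
      QuotientGroup.mk B) :
    ∃ c : ℂ, c ≠ 0 ∧ (B : Matrix (Fin 2) (Fin 2) ℂ) = c • (A : Matrix (Fin 2) (Fin 2) ℂ) := by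
  rw [QuotientGroup.eq] at h
  obtain ⟨c, hc⟩ := aux_central_scalar _ h
  have hval : ((A⁻¹ : GL (Fin 2) ℂ) : Matrix (Fin 2) (Fin 2) ℂ) * B = c • 1 := by
    simpa [Units.val_mul] using hc
  have hB : (B : Matrix (Fin 2) (Fin 2) ℂ) = c • (A : Matrix (Fin 2) (Fin 2) ℂ) := by
    calc (B : Matrix (Fin 2) (Fin 2) ℂ)
        = ((A : Matrix (Fin 2) (Fin 2) ℂ) * ((A⁻¹ : GL (Fin 2) ℂ) : Matrix (Fin 2) (Fin 2) ℂ)) * B := by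
          rw [← Units.val_mul, mul_inv_cancel, Units.val_one, one_mul]
      _ = (A : Matrix (Fin 2) (Fin 2) ℂ) * (c • 1) := by rw [mul_assoc, hval]
      _ = c • (A : Matrix (Fin 2) (Fin 2) ℂ) := by rw [Matrix.mul_smul, mul_one]
  refine ⟨c, ?_, hB⟩
  rintro rfl
  apply Units.ne_zero (A⁻¹ * B)
  show ((A⁻¹ : GL (Fin 2) ℂ) : Matrix (Fin 2) (Fin 2) ℂ) * B = 0
  rw [hval]
  simp

/-- The projective general linear group `PGL(2,ℂ) = GL(2,ℂ)/center`. -/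
abbrev PGL2 : Type := GL (Fin 2) ℂ ⧸ Subgroup.center (GL (Fin 2) ℂ)

/-- Every finite subgroup of `PGL(2,ℂ)` is conjugate, within `PGL(2,ℂ)`, to a subgroup of the
image of the unitary group `U(2)` under the canonical projection `GL(2,ℂ) → PGL(2,ℂ)`. -/
theorem stmt11 (G : Subgroup PGL2) (hG : Finite G) :
    ∃ x : PGL2, ∀ g ∈ G, ∃ M : GL (Fin 2) ℂ,
      (M : Matrix (Fin 2) (Fin 2) ℂ) ∈ Matrix.unitaryGroup (Fin 2) ℂ ∧
      x * g * x⁻¹ = QuotientGroup.mk M := by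
  classical
  have : Fintype G := Fintype.ofFinite G
  -- choose lifts of each element of `G` to `GL(2,ℂ)`
  choose L hL using fun g : G => QuotientGroup.mk_surjective (g : PGL2)
  -- normalize the lifts to have determinant of absolute value one
  set s : G → ℝ :=
    fun g => (Real.sqrt ‖Matrix.det ((L g) : Matrix (Fin 2) (Fin 2) ℂ)‖)⁻¹ with hs
  have hdetL : ∀ g : G, Matrix.det ((L g) : Matrix (Fin 2) (Fin 2) ℂ) ≠ 0 := fun g =>
    ((Matrix.isUnit_iff_isUnit_det _).mp (L g).isUnit).ne_zero
  have habsL : ∀ g : G, 0 < ‖Matrix.det ((L g) : Matrix (Fin 2) (Fin 2) ℂ)‖ :=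
    fun g => norm_pos_iff.mpr (hdetL g)
  have hspos : ∀ g : G, 0 < s g := fun g => by
    rw [hs]
    exact inv_pos.mpr (Real.sqrt_pos.mpr (habsL g))
  set N : G → Matrix (Fin 2) (Fin 2) ℂ :=
    fun g => ((s g : ℂ)) • ((L g) : Matrix (Fin 2) (Fin 2) ℂ) with hN
  have habs : ∀ g : G, ‖Matrix.det (N g)‖ = 1 := by
    intro g
    rw [hN]
    simp only [Matrix.det_smul, Fintype.card_fin]
    rw [norm_mul, norm_pow, Complex.norm_real, Real.norm_eq_abs, abs_of_pos (hspos g)]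
    show ((Real.sqrt ‖Matrix.det ((L g) : Matrix (Fin 2) (Fin 2) ℂ)‖)⁻¹) ^ 2 *
      ‖Matrix.det ((L g) : Matrix (Fin 2) (Fin 2) ℂ)‖ = 1
    rw [inv_pow, Real.sq_sqrt (habsL g).le, inv_mul_cancel₀ (habsL g).ne']
  have hNdet : ∀ g : G, Matrix.det (N g) ≠ 0 := by
    intro g h0
    have := habs g
    rw [h0] at this
    simp at this
  have hNunit : ∀ g : G, IsUnit (N g) := fun g =>
    (Matrix.isUnit_iff_isUnit_det _).mpr (hNdet g).isUnit
  -- multiplicativity of the normalized lifts up to unimodular scalars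
  have hmul : ∀ g h : G, ∃ lam : ℂ, ‖lam‖ = 1 ∧ N g * N h = lam • N (g * h) := by
    intro g h
    have hq : (QuotientGroup.mk (L (g * h)) : PGL2) = QuotientGroup.mk (L g * L h) := by
      rw [hL, QuotientGroup.mk_mul, hL, hL, Subgroup.coe_mul]
    obtain ⟨c, hc0, hc⟩ := aux_lift_eq _ _ hq
    set lam : ℂ := ((s g : ℂ) * (s h : ℂ) * c) * ((s (g * h) : ℂ))⁻¹ with hlamdef
    have hNgh : N g * N h = lam • N (g * h) := by
      rw [hN]
      simp only [Matrix.smul_mul, Matrix.mul_smul, smul_smul]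
      rw [← Units.val_mul, hc, smul_smul]
      congr 1
      have hsne : ((s (g * h) : ℂ)) ≠ 0 := by
        exact_mod_cast (hspos (g * h)).ne'
      rw [hlamdef, mul_assoc ((s g : ℂ) * (s h : ℂ) * c), inv_mul_cancel₀ hsne, mul_one]
      ring
    refine ⟨lam, ?_, hNgh⟩
    have hdet := congrArg (fun M => ‖Matrix.det M‖) hNgh
    simp only [Matrix.det_mul, Matrix.det_smul, Fintype.card_fin, norm_mul, norm_pow,
      habs g, habs h, habs (g * h), mul_one, one_mul] at hdet
    have ha := norm_nonneg lam
    have hfac : (‖lam‖ - 1) * (‖lam‖ + 1) = 0 := by nlinarith [hdet]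
    rcases mul_eq_zero.mp hfac with h1 | h1
    · linarith
    · linarith
  -- the averaged positive definite matrix
  set P : Matrix (Fin 2) (Fin 2) ℂ := ∑ g : G, (N g)ᴴ * (N g) with hP
  have hPherm : P.IsHermitian := by
    show Pᴴ = P
    rw [hP, Matrix.conjTranspose_sum]
    exact Finset.sum_congr rfl fun g _ => Matrix.isHermitian_conjTranspose_mul_self (N g)
  have hterm_pos : ∀ (g : G) (x : Fin 2 → ℂ), x ≠ 0 →
      0 < dotProduct (star x) (((N g)ᴴ * N g) *ᵥ x) := by
    intro g x hx
    rw [← Matrix.mulVec_mulVec, Matrix.dotProduct_mulVec, Matrix.vecMul_conjTranspose, star_star]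
    refine dotProduct_star_self_pos_iff.mpr fun h0 => hx ?_
    exact Matrix.mulVec_injective_iff_isUnit.mpr (hNunit g) (by simpa using h0)
  have hPpos : P.PosDef := by
    refine Matrix.PosDef.of_dotProduct_mulVec_pos hPherm fun x hx => ?_
    have hsum : (∑ g : G, (N g)ᴴ * N g) *ᵥ x = ∑ g : G, ((N g)ᴴ * N g) *ᵥ x :=
      map_sum (AddMonoidHom.mk' (fun M : Matrix (Fin 2) (Fin 2) ℂ => M *ᵥ x)
        (fun A B => Matrix.add_mulVec A B x)) _ _
    have hdsum : star x ⬝ᵥ (∑ g : G, ((N g)ᴴ * N g) *ᵥ x) = ∑ g : G, star x ⬝ᵥ (((N g)ᴴ * N g) *ᵥ x) :=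
      map_sum (AddMonoidHom.mk' (fun v : Fin 2 → ℂ => star x ⬝ᵥ v)
        (fun a b => dotProduct_add _ a b)) _ _
    rw [hP, hsum, hdsum]
    exact Finset.sum_pos' (fun g _ => (Matrix.posSemidef_conjTranspose_mul_self (N g)).dotProduct_mulVec_nonneg x)
      ⟨1, Finset.mem_univ 1, hterm_pos 1 x hx⟩
  -- invariance of `P` under the normalized lifts
  have hinv : ∀ h : G, (N h)ᴴ * P * (N h) = P := by
    intro h
    have step : (N h)ᴴ * P * N h = ∑ g : G, (N (g * h))ᴴ * N (g * h) := by
      rw [hP, Finset.mul_sum, Finset.sum_mul]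
      refine Finset.sum_congr rfl fun g _ => ?_
      obtain ⟨lam, hlam1, hlam⟩ := hmul g h
      have h1 : (N h)ᴴ * ((N g)ᴴ * N g) * N h = (N g * N h)ᴴ * (N g * N h) := by
        rw [Matrix.conjTranspose_mul]
        simp only [mul_assoc]
      rw [h1, hlam, Matrix.conjTranspose_smul, Matrix.smul_mul, Matrix.mul_smul, smul_smul]
      have h2 : star lam * lam = 1 := by
        rw [Complex.star_def, ← Complex.normSq_eq_conj_mul_self]
        rw [Complex.normSq_eq_norm_sq, hlam1]
        norm_num
      rw [h2, one_smul]
    rw [step, hP]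
    exact Fintype.sum_equiv (Equiv.mulRight h) _ _ (fun g => rfl)
  -- take the positive square root of `P`
  obtain ⟨B, hBB, hBherm⟩ : ∃ B : Matrix (Fin 2) (Fin 2) ℂ, B * B = P ∧ Bᴴ = B := by
    open scoped MatrixOrder in
    exact ⟨CFC.sqrt P, CFC.sqrt_mul_sqrt_self P (Matrix.nonneg_iff_posSemidef.mpr hPpos.posSemidef),
      (Matrix.nonneg_iff_posSemidef.mp (CFC.sqrt_nonneg P)).1⟩
  have hdetP : Matrix.det P ≠ 0 := hPpos.det_pos.ne'
  have hBdet : Matrix.det B ≠ 0 := by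
    intro h0; apply hdetP; rw [← hBB, Matrix.det_mul, h0, mul_zero]
  obtain ⟨uB, huB⟩ := (Matrix.isUnit_iff_isUnit_det _).mpr hBdet.isUnit
  set Binv : Matrix (Fin 2) (Fin 2) ℂ := ((uB⁻¹ : GL (Fin 2) ℂ) : Matrix (Fin 2) (Fin 2) ℂ)
    with hBinvdef
  have hBBinv : B * Binv = 1 := by rw [← huB]; exact uB.mul_inv
  have hBinvB : Binv * B = 1 := by rw [← huB]; exact uB.inv_mul
  have hBinvherm : Binvᴴ = Binv := by
    have h1 : Binvᴴ * B = 1 := by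
      have h2 := congrArg Matrix.conjTranspose hBBinv
      rwa [Matrix.conjTranspose_mul, Matrix.conjTranspose_one, hBherm] at h2
    calc Binvᴴ = Binvᴴ * (B * Binv) := by rw [hBBinv, mul_one]
    _ = (Binvᴴ * B) * Binv := by rw [mul_assoc]
    _ = Binv := by rw [h1, one_mul]
  -- conclusion
  refine ⟨QuotientGroup.mk uB, fun g hg => ?_⟩
  set g' : G := ⟨g, hg⟩ with hg'
  have hsnz : ((s g' : ℂ)) ≠ 0 := by exact_mod_cast (hspos g').ne'
  set Zu : GL (Fin 2) ℂ :=
    ⟨(s g' : ℂ) • 1, ((s g' : ℂ))⁻¹ • 1,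
      by rw [Matrix.smul_mul, Matrix.mul_smul, smul_smul, mul_inv_cancel₀ hsnz, one_smul, one_mul],
      by rw [Matrix.smul_mul, Matrix.mul_smul, smul_smul, inv_mul_cancel₀ hsnz, one_smul, one_mul]⟩
    with hZu
  set uN : GL (Fin 2) ℂ := Zu * L g' with huN
  have huNval : (uN : Matrix (Fin 2) (Fin 2) ℂ) = N g' := by
    rw [huN, Units.val_mul, hZu]
    show ((s g' : ℂ) • 1) * ((L g' : GL (Fin 2) ℂ) : Matrix (Fin 2) (Fin 2) ℂ) = N g'
    rw [Matrix.smul_mul, one_mul, hN]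
  have hmkuN : (QuotientGroup.mk uN : PGL2) = g := by
    rw [huN, QuotientGroup.mk_mul]
    have hz : (QuotientGroup.mk Zu : PGL2) = 1 :=
      (QuotientGroup.eq_one_iff _).mpr (aux_scalar_central Zu (s g') rfl)
    rw [hz, one_mul, hL]
  refine ⟨uB * uN * uB⁻¹, ?_, ?_⟩
  · -- the conjugated element is unitary
    rw [Matrix.mem_unitaryGroup_iff']
    have hval : ((uB * uN * uB⁻¹ : GL (Fin 2) ℂ) : Matrix (Fin 2) (Fin 2) ℂ)
        = B * (N g' * Binv) := by
      simp only [Units.val_mul, huB, huNval, hBinvdef, mul_assoc]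
    rw [hval, Matrix.star_eq_conjTranspose]
    have hinvX : ∀ X : Matrix (Fin 2) (Fin 2) ℂ,
        (N g')ᴴ * (P * (N g' * X)) = P * X := by
      intro X
      calc (N g')ᴴ * (P * (N g' * X)) = ((N g')ᴴ * P * N g') * X := by
            simp only [mul_assoc]
      _ = P * X := by rw [hinv g']
    calc (B * (N g' * Binv))ᴴ * (B * (N g' * Binv))
        = Binv * ((N g')ᴴ * (B * (B * (N g' * Binv)))) := by
          simp only [Matrix.conjTranspose_mul, hBinvherm, hBherm, mul_assoc]
    _ = Binv * ((N g')ᴴ * (P * (N g' * Binv))) := by rw [← mul_assoc B B, hBB]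
    _ = Binv * (P * Binv) := by rw [hinvX Binv]
    _ = Binv * (B * (B * Binv)) := by rw [← mul_assoc B B, hBB]
    _ = 1 := by rw [hBBinv, mul_one, hBinvB]
  · -- the conjugation identity in `PGL2`
    rw [← hmkuN]
    simp only [QuotientGroup.mk_mul, QuotientGroup.mk_inv]
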